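/- arXiv:2601.01396 — 3 statements merged into one kernel-verified Lean document; each statement's English description precedes it below -/
import Mathlib

section
/- Let A be a finitely generated ℂ-algebra and J ⊊ A a proper ideal. Then √J = ⋂ m, where the intersection runs over all maximal ideals m of A containing J. -/
/-- For a finitely generated `ℂ`-algebra `A` and a proper ideal `J ⊊ A`,
the radical of `J` is the intersection of all maximal ideals containing `J`. -/
theorem radical_eq_sInf_maximal_of_finiteType {A : Type*} [CommRing A]
    [Algebra ℂ A] [Algebra.FiniteType ℂ A]
    (J : Ideal A) (hJ : J ≠ ⊤) :
    J.radical = sInf {m : Ideal A | J ≤ m ∧ m.IsMaximal} := by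
  have : IsJacobsonRing A := isJacobsonRing_of_finiteType (A := ℂ)
  rw [Ideal.radical_eq_jacobson]; rfl
end

section
/- Let I be a prime ideal of ℂ[z₁,…,zₙ] with zero set X = V(I). Then the natural ring homomorphism Φ : ℂ[z₁,…,zₙ]/I → O_{ℂⁿ,o}/(I·O_{ℂⁿ,o}), sending f + I to f + I·O_{ℂⁿ,o}, is injective; that is, if a polynomial f lies in the ideal generated by I in the ring of germs of holomorphic functions at the origin o ∈ X, then f ∈ I. -/
set_option synthInstance.maxHeartbeats 1000000
set_option maxHeartbeats 1600000


open Filter Polynomial Asymptotics in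
/-- One-variable: a polynomial that is O(t^N) near 0 (off 0) has vanishing low coefficients. -/
lemma poly_coeff_eq_zero_of_isBigO (N : ℕ) :
    ∀ (p : Polynomial ℂ), ((fun t : ℂ => p.eval t) =O[nhdsWithin 0 {0}ᶜ] fun t => ‖t‖ ^ N) →
      ∀ j < N, p.coeff j = 0 := by
  induction N with
  | zero => intro p _ j hj; omega
  | succ N ih =>
    intro p hp j hj
    have h0 : p.eval 0 = 0 := by
      have h1 : Tendsto (fun t : ℂ => p.eval t) (nhdsWithin 0 {0}ᶜ) (nhds (p.eval 0)) :=
        (p.continuous_aeval.tendsto 0).mono_left nhdsWithin_le_nhds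
      have h2 : Tendsto (fun t : ℂ => ‖t‖ ^ (N+1)) (nhdsWithin 0 {0}ᶜ) (nhds 0) := by
        have : Tendsto (fun t : ℂ => ‖t‖ ^ (N+1)) (nhds 0) (nhds 0) := by
          have := ((continuous_norm.pow (N+1)).tendsto (0:ℂ))
          simp at this; exact this
        exact this.mono_left nhdsWithin_le_nhds
      exact tendsto_nhds_unique h1 (hp.trans_tendsto h2)
    obtain ⟨r, hr⟩ : X ∣ p := X_dvd_iff.2 (by rwa [coeff_zero_eq_eval_zero])
    have hrO : (fun t : ℂ => r.eval t) =O[nhdsWithin 0 {0}ᶜ] fun t => ‖t‖ ^ N := by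
      rw [isBigO_iff] at hp ⊢
      obtain ⟨C, hC⟩ := hp
      refine ⟨C, ?_⟩
      filter_upwards [hC, self_mem_nhdsWithin] with t ht ht0
      have ht0' : t ≠ 0 := ht0
      rw [hr] at ht
      simp only [eval_mul, eval_X, norm_mul] at ht
      have : ‖t‖ * ‖r.eval t‖ ≤ C * (‖t‖ * ‖t‖ ^ N) := by
        calc ‖t‖ * ‖r.eval t‖ ≤ C * ‖‖t‖ ^ (N+1)‖ := ht
        _ = C * (‖t‖ * ‖t‖ ^ N) := by rw [Real.norm_of_nonneg (by positivity)]; ring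
      have htpos : (0:ℝ) < ‖t‖ := by simpa [norm_pos_iff] using ht0'
      have := (mul_le_mul_iff_right₀ htpos).1 (by linarith [this] : ‖t‖ * ‖r.eval t‖ ≤ ‖t‖ * (C * ‖t‖ ^ N))
      calc ‖r.eval t‖ ≤ C * ‖t‖ ^ N := this
      _ ≤ C * ‖‖t‖ ^ N‖ := by rw [Real.norm_of_nonneg (by positivity)]
    rcases Nat.eq_zero_or_pos j with rfl | hjpos
    · rwa [coeff_zero_eq_eval_zero]
    · obtain ⟨j, rfl⟩ := Nat.exists_eq_succ_of_ne_zero hjpos.ne'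
      rw [hr, coeff_X_mul]
      exact ih r hrO j (by omega)


open MvPolynomial in
/-- A continuous multilinear map applied on the diagonal is a polynomial function. -/
lemma multilinear_diag_poly {n m : ℕ}
    (c : ContinuousMultilinearMap ℂ (fun _ : Fin m => (Fin n → ℂ)) ℂ) :
    ∃ P : MvPolynomial (Fin n) ℂ, ∀ y : Fin n → ℂ, eval y P = c (fun _ => y) := by
  refine ⟨∑ d : Fin m → Fin n, C (c (fun j => Pi.single (d j) 1)) * ∏ j, X (d j), fun y => ?_⟩
  have hy : y = ∑ i : Fin n, y i • (Pi.single i 1 : Fin n → ℂ) := by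
    funext j
    simp [Pi.single_apply]
  have key : c (fun _ : Fin m => y)
      = ∑ d : Fin m → Fin n, (∏ j, y (d j)) • c (fun j => Pi.single (d j) 1) := by
    conv_lhs => rw [hy]
    rw [show (c fun _ : Fin m => ∑ i : Fin n, y i • (Pi.single i 1 : Fin n → ℂ))
        = c.toMultilinearMap (fun _ : Fin m => ∑ i : Fin n, y i • (Pi.single i 1 : Fin n → ℂ))
        from rfl]
    rw [c.toMultilinearMap.map_sum (g := fun (_ : Fin m) (i : Fin n) => y i • (Pi.single i 1 : Fin n → ℂ))]
    congr 1
    funext d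
    exact c.toMultilinearMap.map_smul_univ (fun j => y (d j)) (fun j => Pi.single (d j) 1)
  rw [key]
  simp [smul_eq_mul, mul_comm]


open MvPolynomial in
lemma eval_smul_homo {n d : ℕ} {φ : MvPolynomial (Fin n) ℂ} (hφ : φ.IsHomogeneous d)
    (t : ℂ) (x : Fin n → ℂ) : eval (t • x) φ = t ^ d * eval x φ := by
  rw [eval_eq', eval_eq', Finset.mul_sum]
  refine Finset.sum_congr rfl fun s hs => ?_
  have h1 : ∑ i : Fin n, s i = d := by
    have h2 := hφ (mem_support_iff.1 hs)
    rw [Finsupp.weight_apply] at h2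
    rw [← h2, Finsupp.sum_fintype]
    · simp
    · simp
  calc coeff s φ * ∏ i, (t • x) i ^ s i
      = coeff s φ * ∏ i, (t ^ s i * x i ^ s i) := by
        congr 1; refine Finset.prod_congr rfl fun i _ => ?_
        simp [mul_pow]
    _ = coeff s φ * ((∏ i, t ^ s i) * ∏ i, x i ^ s i) := by rw [Finset.prod_mul_distrib]
    _ = t ^ d * (coeff s φ * ∏ i, x i ^ s i) := by
        rw [Finset.prod_pow_eq_pow_sum, h1]; ring


open MvPolynomial in
lemma degree_eq_sum_univ {n : ℕ} (s : Fin n →₀ ℕ) : s.degree = ∑ i : Fin n, s i := by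
  rw [Finsupp.degree]
  exact Finset.sum_subset (Finset.subset_univ _) fun i _ hi => Finsupp.notMem_support_iff.mp hi

open MvPolynomial in
lemma mem_pow_span_X {n N : ℕ} (q : MvPolynomial (Fin n) ℂ)
    (hq : ∀ s ∈ q.support, N ≤ s.degree) :
    q ∈ (Ideal.span (Set.range (X : Fin n → MvPolynomial (Fin n) ℂ))) ^ N := by
  set m := Ideal.span (Set.range (X : Fin n → MvPolynomial (Fin n) ℂ)) with hm
  have hXmem : ∀ i : Fin n, (X i : MvPolynomial (Fin n) ℂ) ∈ m :=
    fun i => Ideal.subset_span ⟨i, rfl⟩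
  have hprod : ∀ (t : Finset (Fin n)) (s : Fin n →₀ ℕ),
      (∏ i ∈ t, X i ^ s i : MvPolynomial (Fin n) ℂ) ∈ m ^ (∑ i ∈ t, s i) := by
    intro t s
    induction t using Finset.induction with
    | empty => simp
    | insert _ _ hnotmem ih =>
      rename_i a t'
      rw [Finset.prod_insert hnotmem, Finset.sum_insert hnotmem, pow_add]
      exact Ideal.mul_mem_mul (Ideal.pow_mem_pow (hXmem a) _) ih
  have hmono : ∀ s : Fin n →₀ ℕ, ∀ c : ℂ, monomial s c ∈ m ^ s.degree := by
    intro s c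
    rw [monomial_eq]
    have h1 : (s.prod fun i e => (X i : MvPolynomial (Fin n) ℂ) ^ e)
        = ∏ i ∈ s.support, X i ^ s i := rfl
    rw [h1]
    have := hprod s.support s
    rw [show (∑ i ∈ s.support, s i) = s.degree from rfl] at this
    exact Ideal.mul_mem_left _ _ this
  rw [q.as_sum]
  refine Ideal.sum_mem _ fun s hs => ?_
  exact Ideal.pow_le_pow_right (hq s hs) (hmono s (coeff s q))


open MvPolynomial Filter Asymptotics in
lemma exists_taylor_poly {n : ℕ} {h : (Fin n → ℂ) → ℂ} (hh : AnalyticAt ℂ h 0) (N : ℕ) :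
    ∃ P : MvPolynomial (Fin n) ℂ,
      (fun y => h y - eval y P) =O[nhds (0 : Fin n → ℂ)] fun y => ‖y‖ ^ N := by
  obtain ⟨p, hp⟩ := hh
  have hb := hp.isBigO_sub_partialSum_pow N
  choose Q hQ using fun k : ℕ => multilinear_diag_poly (p k)
  refine ⟨∑ k ∈ Finset.range N, Q k, ?_⟩
  have : ∀ y : Fin n → ℂ, h (0 + y) - p.partialSum N y
      = h y - eval y (∑ k ∈ Finset.range N, Q k) := by
    intro y
    rw [zero_add, FormalMultilinearSeries.partialSum]
    simp [hQ]
  exact (hb.congr' (Eventually.of_forall this) (Eventually.of_forall fun _ => rfl))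


open MvPolynomial Filter Asymptotics in
lemma coeff_eq_zero_of_isBigO {n : ℕ} (q : MvPolynomial (Fin n) ℂ) (N : ℕ)
    (hq : (fun x => eval x q) =O[nhds (0 : Fin n → ℂ)] fun x => ‖x‖ ^ N) :
    ∀ s : Fin n →₀ ℕ, s.degree < N → coeff s q = 0 := by
  have hcomp : ∀ d < N, homogeneousComponent d q = 0 := by
    intro d hd
    have heval : ∀ x : Fin n → ℂ, eval x (homogeneousComponent d q) = 0 := by
      intro x
      -- one-variable polynomial t ↦ q (t • x)
      set px : Polynomial ℂ := ∑ e ∈ Finset.range (q.totalDegree + 1),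
        Polynomial.C (eval x (homogeneousComponent e q)) * Polynomial.X ^ e with hpx
      have hevalt : ∀ t : ℂ, px.eval t = eval (t • x) q := by
        intro t
        conv_rhs => rw [← q.sum_homogeneousComponent]
        rw [map_sum]
        simp only [hpx, Polynomial.eval_finset_sum, Polynomial.eval_mul, Polynomial.eval_C,
          Polynomial.eval_pow, Polynomial.eval_X]
        refine Finset.sum_congr rfl fun e _ => ?_
        rw [eval_smul_homo (homogeneousComponent_isHomogeneous e q) t x]
        ring
      -- big-O along the line
      have htend : Tendsto (fun t : ℂ => t • x) (nhdsWithin 0 {0}ᶜ) (nhds (0 : Fin n → ℂ)) := by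
        have : Tendsto (fun t : ℂ => t • x) (nhds 0) (nhds ((0:ℂ) • x)) :=
          (continuous_id.smul continuous_const).tendsto 0
        rw [zero_smul] at this
        exact this.mono_left nhdsWithin_le_nhds
      have h1 : (fun t : ℂ => eval (t • x) q) =O[nhdsWithin 0 {0}ᶜ] fun t => ‖t • x‖ ^ N :=
        hq.comp_tendsto htend
      have h2 : (fun t : ℂ => ‖t • x‖ ^ N) =O[nhdsWithin 0 {0}ᶜ] fun t => ‖t‖ ^ N := by
        rw [isBigO_iff]
        refine ⟨‖x‖ ^ N, Eventually.of_forall fun t => ?_⟩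
        rw [norm_smul]
        rw [Real.norm_of_nonneg (by positivity), Real.norm_of_nonneg (by positivity)]
        rw [mul_pow]
        nlinarith [pow_nonneg (norm_nonneg t) N, pow_nonneg (norm_nonneg x) N]
      have h3 : (fun t : ℂ => px.eval t) =O[nhdsWithin 0 {0}ᶜ] fun t => ‖t‖ ^ N := by
        have := h1.trans h2
        exact this.congr' (Eventually.of_forall fun t => (hevalt t).symm)
          (Eventually.of_forall fun _ => rfl)
      have hco := poly_coeff_eq_zero_of_isBigO N px h3 d hd
      -- extract coefficient
      rcases le_or_gt d q.totalDegree with hle | hgt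
      · rw [hpx] at hco
        rw [Polynomial.finset_sum_coeff] at hco
        simp only [Polynomial.coeff_C_mul, Polynomial.coeff_X_pow] at hco
        rw [Finset.sum_eq_single d] at hco
        · simpa using hco
        · intro e _ hne; simp [hne.symm]
        · intro hnot; exact absurd (Finset.mem_range.2 (by omega)) hnot
      · rw [homogeneousComponent_eq_zero _ _ hgt]; simp
    have := MvPolynomial.funext (R := ℂ) (p := homogeneousComponent d q) (q := 0)
      (fun x => by rw [heval x]; simp)
    exact this
  intro s hs
  have := hcomp s.degree hs
  have hc := coeff_homogeneousComponent (n := s.degree) (φ := q) s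
  rw [this] at hc
  simpa using hc.symm


/-- For a prime ideal `I ⊆ ℂ[z₁,…,zₙ]` whose zero set `X = V(I)` contains
the origin, the natural map `ℂ[z₁,…,zₙ]/I → O_{ℂⁿ,o}/(I·O_{ℂⁿ,o})` is injective: if a
polynomial `f` can be written, on a neighborhood `U` of the origin, as a finite sum
`f = Σ h_k · g_k` with `g_k ∈ I` and `h_k` holomorphic (analytic) on `U`, then `f ∈ I`. -/
theorem polynomial_mem_prime_ideal_of_mem_germ_ideal {n : ℕ}
    (I : Ideal (MvPolynomial (Fin n) ℂ)) (hI : I.IsPrime)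
    (horigin : ∀ g ∈ I, MvPolynomial.eval (0 : Fin n → ℂ) g = 0)
    (f : MvPolynomial (Fin n) ℂ)
    (hf : ∃ (U : Set (Fin n → ℂ)) (_ : U ∈ nhds (0 : Fin n → ℂ)) (m : ℕ)
        (g : Fin m → MvPolynomial (Fin n) ℂ) (h : Fin m → (Fin n → ℂ) → ℂ),
      (∀ k, g k ∈ I) ∧
      (∀ k, ∀ x ∈ U, AnalyticAt ℂ (h k) x) ∧
      (∀ x ∈ U, MvPolynomial.eval x f = ∑ k, h k x * MvPolynomial.eval x (g k))) :
    f ∈ I := by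
  classical
  obtain ⟨U, hU, m, g, h, hgI, hana, heq⟩ := hf
  set mId : Ideal (MvPolynomial (Fin n) ℂ) :=
    Ideal.span (Set.range (MvPolynomial.X : Fin n → MvPolynomial (Fin n) ℂ)) with hmId
  -- Step 1: for every N, f ∈ I + mId ^ N
  have key : ∀ N : ℕ, ∃ Q ∈ mId ^ N, f - Q ∈ I := by
    intro N
    have h0U : (0 : Fin n → ℂ) ∈ U := mem_of_mem_nhds hU
    choose P hP using fun k : Fin m => exists_taylor_poly (hana k 0 h0U) N
    set Q : MvPolynomial (Fin n) ℂ := f - ∑ k, P k * g k with hQ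
    have hbig : (fun x => MvPolynomial.eval x Q) =O[nhds (0 : Fin n → ℂ)]
        fun x => ‖x‖ ^ N := by
      have hEq : (fun x => MvPolynomial.eval x Q) =ᶠ[nhds (0 : Fin n → ℂ)]
          (fun x => ∑ k, (h k x - MvPolynomial.eval x (P k)) * MvPolynomial.eval x (g k)) := by
        filter_upwards [hU] with x hx
        rw [hQ]
        rw [map_sub, map_sum, heq x hx]
        rw [(Finset.sum_sub_distrib _ _).symm]
        refine Finset.sum_congr rfl fun k _ => ?_
        rw [map_mul]
        ring
      refine hEq.trans_isBigO ?_
      refine Asymptotics.IsBigO.fun_sum fun k _ => ?_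
      have hg : (fun x => MvPolynomial.eval x (g k)) =O[nhds (0 : Fin n → ℂ)]
          (fun _ => (1 : ℝ)) := by
        have : Continuous fun x : Fin n → ℂ => MvPolynomial.eval x (g k) := by continuity
        exact (this.tendsto 0).isBigO_one ℝ
      have := (hP k).mul hg
      simpa using this
    have hQmem : Q ∈ mId ^ N := by
      refine mem_pow_span_X Q fun s hs => ?_
      by_contra hlt
      exact (MvPolynomial.mem_support_iff.1 hs)
        (coeff_eq_zero_of_isBigO Q N hbig s (by omega))
    refine ⟨Q, hQmem, ?_⟩
    have : f - Q = ∑ k, P k * g k := by rw [hQ]; ring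
    rw [this]
    exact Ideal.sum_mem _ fun k _ => I.mul_mem_left _ (hgI k)
  -- Step 2: Krull intersection
  haveI := hI
  have hne : Ideal.map (Ideal.Quotient.mk I) mId ≠ ⊤ := by
    intro htop
    rw [Ideal.eq_top_iff_one] at htop
    obtain ⟨q, hqm, hq1⟩ :=
      (Ideal.mem_map_iff_of_surjective (Ideal.Quotient.mk I)
        Ideal.Quotient.mk_surjective).1 htop
    have hq1' : q - 1 ∈ I := by
      rw [← Ideal.Quotient.eq_zero_iff_mem, map_sub, map_one, hq1, sub_self]
    have h1 : MvPolynomial.eval (0 : Fin n → ℂ) (q - 1) = 0 := horigin _ hq1'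
    have h2 : MvPolynomial.eval (0 : Fin n → ℂ) q = 0 := by
      have hle : mId ≤ RingHom.ker (MvPolynomial.eval (0 : Fin n → ℂ)) := by
        rw [hmId, Ideal.span_le]
        rintro _ ⟨i, rfl⟩
        simp [RingHom.mem_ker]
      exact hle hqm
    rw [map_sub, h2, map_one] at h1
    norm_num at h1
  have hmem : Ideal.Quotient.mk I f ∈
      ⨅ N : ℕ, (Ideal.map (Ideal.Quotient.mk I) mId) ^ N := by
    rw [Ideal.mem_iInf]
    intro N
    obtain ⟨Q, hQm, hfQ⟩ := key N
    have hEq : Ideal.Quotient.mk I f = Ideal.Quotient.mk I Q := by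
      rw [Ideal.Quotient.mk_eq_mk_iff_sub_mem]
      exact hfQ
    rw [hEq, ← Ideal.map_pow]
    exact Ideal.mem_map_of_mem _ hQm
  have hbot := Ideal.iInf_pow_eq_bot_of_isDomain (I := Ideal.map (Ideal.Quotient.mk I) mId) hne
  rw [hbot] at hmem
  rwa [Ideal.mem_bot, Ideal.Quotient.eq_zero_iff_mem] at hmem
end

section
/- Let {ν_j} be a sequence of valuations on a Noetherian local ring R (each ν_j : R \ {0} → ℝ≥0 satisfying ν_j(fg) = ν_j(f)+ν_j(g), ν_j(f+g) ≥ min(ν_j(f),ν_j(g)), ν_j(u)=0 for units u). Assume sup_j ν_j(g) < +∞ for every nonzero g ∈ R. Then there exists a subsequence {ν_{j_l}} such that for every nonzero f ∈ R the limit ν₀(f) := lim_l ν_{j_l}(f) exists, and ν₀ is a valuation on R. -/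
open Filter Set

section ValAux

variable {R : Type*} [CommRing R]

/-- The ideal of elements `f` with `f = 0` or `w f ≥ q`, for a valuation-like `w`. -/
def valIdeal (w : R → ℝ) (hnonneg : ∀ f : R, f ≠ 0 → 0 ≤ w f)
    (hmul : ∀ f g : R, f ≠ 0 → g ≠ 0 → w (f * g) = w f + w g)
    (hadd : ∀ f g : R, f ≠ 0 → g ≠ 0 → f + g ≠ 0 → min (w f) (w g) ≤ w (f + g))
    (q : ℚ) : Ideal R where
  carrier := {f | f = 0 ∨ (q : ℝ) ≤ w f}
  zero_mem' := Or.inl rfl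
  add_mem' := by
    intro a b ha hb
    by_cases h0a : a = 0
    · simpa [h0a] using hb
    by_cases h0b : b = 0
    · simpa [h0b] using ha
    have ha' : (q : ℝ) ≤ w a := ha.resolve_left h0a
    have hb' : (q : ℝ) ≤ w b := hb.resolve_left h0b
    by_cases hab : a + b = 0
    · exact Or.inl hab
    · exact Or.inr (le_trans (le_min ha' hb') (hadd a b h0a h0b hab))
  smul_mem' := by
    intro c x hx
    by_cases h0c : c = 0
    · simp [h0c]
    by_cases h0x : x = 0
    · simp [h0x]
    have hx' : (q : ℝ) ≤ w x := hx.resolve_left h0x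
    refine Or.inr ?_
    have : w (c * x) = w c + w x := hmul c x h0c h0x
    rw [smul_eq_mul, this]
    have := hnonneg c h0c
    linarith

theorem mem_valIdeal_iff {w : R → ℝ} {hnonneg : ∀ f : R, f ≠ 0 → 0 ≤ w f}
    {hmul : ∀ f g : R, f ≠ 0 → g ≠ 0 → w (f * g) = w f + w g}
    {hadd : ∀ f g : R, f ≠ 0 → g ≠ 0 → f + g ≠ 0 → min (w f) (w g) ≤ w (f + g)}
    {q : ℚ} {f : R} :
    f ∈ valIdeal w hnonneg hmul hadd q ↔ f = 0 ∨ (q : ℝ) ≤ w f := Iff.rfl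

/-- The "liminf" ideal of a family of ideals along an index set `S`:
elements eventually belonging to all but finitely many of the ideals indexed by `S`. -/
def limIdeal (I : ℕ → Ideal R) (S : Set ℕ) : Ideal R where
  carrier := {f | {j ∈ S | f ∉ I j}.Finite}
  zero_mem' := by
    apply Set.finite_empty.subset
    rintro j ⟨-, hj⟩
    exact hj (Ideal.zero_mem _)
  add_mem' := by
    intro a b ha hb
    apply (ha.union hb).subset
    rintro j ⟨hjS, hj⟩
    by_cases h1 : a ∈ I j
    · exact Or.inr ⟨hjS, fun h2 => hj (Ideal.add_mem _ h1 h2)⟩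
    · exact Or.inl ⟨hjS, h1⟩
  smul_mem' := by
    intro c x hx
    apply hx.subset
    rintro j ⟨hjS, hj⟩
    exact ⟨hjS, fun h => hj (Ideal.mul_mem_left _ c h)⟩

theorem mem_limIdeal_iff {I : ℕ → Ideal R} {S : Set ℕ} {f : R} :
    f ∈ limIdeal I S ↔ {j ∈ S | f ∉ I j}.Finite := Iff.rfl

theorem limIdeal_le_of_diff_finite {I : ℕ → Ideal R} {S S' : Set ℕ}
    (h : (S' \ S).Finite) : limIdeal I S ≤ limIdeal I S' := by
  intro f hf
  rw [mem_limIdeal_iff] at hf ⊢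
  apply (hf.union h).subset
  rintro j ⟨hjS', hj⟩
  by_cases hjS : j ∈ S
  · exact Or.inl ⟨hjS, hj⟩
  · exact Or.inr ⟨hjS', hjS⟩

theorem limIdeal_le_of_subset {I : ℕ → Ideal R} {S S' : Set ℕ}
    (h : S' ⊆ S) : limIdeal I S ≤ limIdeal I S' :=
  limIdeal_le_of_diff_finite (by simp [Set.diff_eq_empty.mpr h])

/-- By Noetherianity, along any infinite index set we can pass to an infinite
subset on which the liminf ideal is maximal (hence stable under further refinement). -/
theorem exists_maximal_limIdeal [IsNoetherianRing R] (I : ℕ → Ideal R) (T : Set ℕ)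
    (hT : T.Infinite) :
    ∃ T', T' ⊆ T ∧ T'.Infinite ∧
      ∀ U, U ⊆ T' → U.Infinite → limIdeal I U = limIdeal I T' := by
  obtain ⟨M, hMs, hmax⟩ :=
    (set_has_maximal_iff_noetherian.mpr (inferInstance : IsNoetherian R R))
      ((fun U => limIdeal I U) '' {U | U ⊆ T ∧ U.Infinite})
      ⟨limIdeal I T, ⟨T, ⟨subset_rfl, hT⟩, rfl⟩⟩
  obtain ⟨T', ⟨hT'T, hT'inf⟩, rfl⟩ := hMs
  refine ⟨T', hT'T, hT'inf, fun U hU hUinf => ?_⟩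
  have hle : limIdeal I T' ≤ limIdeal I U := limIdeal_le_of_subset hU
  exact ((hle.lt_or_eq).resolve_left
    (hmax (limIdeal I U) ⟨U, ⟨hU.trans hT'T, hUinf⟩, rfl⟩)).symm

end ValAux

/-- Let `{ν_j}` be a sequence of valuations on a Noetherian local
domain `R`, uniformly bounded at every nonzero element. Then some subsequence
`{ν_{j_l}}` converges pointwise (on nonzero elements) to a limit `ν₀`, which is
again a valuation on `R`. -/
theorem exists_convergent_subsequence_of_valuations {R : Type*} [CommRing R]
    [IsDomain R] [IsNoetherianRing R] [IsLocalRing R]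
    (ν : ℕ → R → ℝ)
    (hnonneg : ∀ j, ∀ f : R, f ≠ 0 → 0 ≤ ν j f)
    (hmul : ∀ j, ∀ f g : R, f ≠ 0 → g ≠ 0 → ν j (f * g) = ν j f + ν j g)
    (hadd : ∀ j, ∀ f g : R, f ≠ 0 → g ≠ 0 → f + g ≠ 0 →
      min (ν j f) (ν j g) ≤ ν j (f + g))
    (hunit : ∀ j, ∀ u : R, IsUnit u → ν j u = 0)
    (hbdd : ∀ g : R, g ≠ 0 → ∃ C : ℝ, ∀ j, ν j g ≤ C) :
    ∃ (φ : ℕ → ℕ), StrictMono φ ∧ ∃ ν₀ : R → ℝ,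
      (∀ f : R, f ≠ 0 → Tendsto (fun l => ν (φ l) f) atTop (nhds (ν₀ f))) ∧
      (∀ f : R, f ≠ 0 → 0 ≤ ν₀ f) ∧
      (∀ f g : R, f ≠ 0 → g ≠ 0 → ν₀ (f * g) = ν₀ f + ν₀ g) ∧
      (∀ f g : R, f ≠ 0 → g ≠ 0 → f + g ≠ 0 → min (ν₀ f) (ν₀ g) ≤ ν₀ (f + g)) ∧
      (∀ u : R, IsUnit u → ν₀ u = 0) := by
  classical
  -- the family of valuation ideals
  set I : ℕ → ℚ → Ideal R := fun j q =>
    valIdeal (ν j) (hnonneg j) (hmul j) (hadd j) q with hI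
  -- an enumeration of the rationals
  obtain ⟨e, he⟩ := exists_surjective_nat ℚ
  -- maximizing step, by Noetherianity
  have step : ∀ (q : ℚ) (T : Set ℕ), T.Infinite →
      ∃ T', T' ⊆ T ∧ T'.Infinite ∧
        ∀ U, U ⊆ T' → U.Infinite →
          limIdeal (fun j => I j q) U = limIdeal (fun j => I j q) T' :=
    fun q T hT => exists_maximal_limIdeal (fun j => I j q) T hT
  choose F hF1 hF2 hF3 using step
  -- the decreasing chain of index sets
  let S : ℕ → {T : Set ℕ // T.Infinite} := fun n =>
    Nat.rec ⟨Set.univ, Set.infinite_univ⟩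
      (fun n p => ⟨F (e n) p.1 p.2, hF2 _ _ _⟩) n
  have hSsub : ∀ n, (S (n + 1)).1 ⊆ (S n).1 := fun n => hF1 _ _ _
  have hSmax : ∀ n, ∀ U, U ⊆ (S (n + 1)).1 → U.Infinite →
      limIdeal (fun j => I j (e n)) U = limIdeal (fun j => I j (e n)) (S (n + 1)).1 :=
    fun n => hF3 _ _ _
  have hSle : ∀ {n m : ℕ}, n ≤ m → (S m).1 ⊆ (S n).1 := by
    intro n m h
    induction h with
    | refl => exact subset_rfl
    | step h ih => exact (hSsub _).trans ih
  -- choose a strictly increasing diagonal sequence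
  have hpick : ∀ (n m : ℕ), ∃ x, x ∈ (S n).1 ∧ m < x := by
    intro n m
    obtain ⟨x, hx, hx2⟩ := (S n).2.exists_gt m
    exact ⟨x, hx, hx2⟩
  choose g hg1 hg2 using hpick
  let φ : ℕ → ℕ := fun n => Nat.rec (g 0 0) (fun n prev => g (n + 1) prev) n
  have hφsucc : ∀ n, φ (n + 1) = g (n + 1) (φ n) := fun n => rfl
  have hφmono : StrictMono φ := by
    apply strictMono_nat_of_lt_succ
    intro n
    rw [hφsucc]
    exact hg2 _ _
  have hφmem : ∀ n, φ n ∈ (S n).1 := by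
    intro n
    cases n with
    | zero => exact hg1 0 0
    | succ n => rw [hφsucc]; exact hg1 (n + 1) (φ n)
  have hφmem' : ∀ {n m : ℕ}, n ≤ m → φ m ∈ (S n).1 := fun h => hSle h (hφmem _)
  -- convergence along the diagonal
  have hconv : ∀ f : R, f ≠ 0 → ∃ L, Tendsto (fun l => ν (φ l) f) atTop (nhds L) := by
    intro f hf
    obtain ⟨C, hC⟩ := hbdd f hf
    set a : ℕ → ℝ := fun l => ν (φ l) f with ha
    have hbl : IsBoundedUnder (· ≤ ·) atTop a :=
      isBoundedUnder_of ⟨C, fun l => hC _⟩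
    have hbg : IsBoundedUnder (· ≥ ·) atTop a :=
      isBoundedUnder_of ⟨0, fun l => hnonneg _ f hf⟩
    have hkey : ¬ liminf a atTop < limsup a atTop := by
      intro hlt
      obtain ⟨q, hq1, hq2⟩ := exists_rat_btwn hlt
      obtain ⟨n, rfl⟩ := he q
      -- the set where the value is at least `e n`, deep in the chain
      have hfreq1 : ∃ᶠ l in atTop, (e n : ℝ) < a l :=
        frequently_lt_of_lt_limsup hbg.isCoboundedUnder_le hq2
      have hfreq2 : ∃ᶠ l in atTop, a l < (e n : ℝ) :=
        frequently_lt_of_liminf_lt hbl.isCoboundedUnder_ge hq1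
      set U : Set ℕ := φ '' {l | n + 1 ≤ l ∧ (e n : ℝ) ≤ a l} with hU
      have hUsub : U ⊆ (S (n + 1)).1 := by
        rintro _ ⟨l, ⟨hl1, _⟩, rfl⟩
        exact hφmem' hl1
      have hUinf : U.Infinite := by
        apply Set.Infinite.image (Set.injOn_of_injective hφmono.injective)
        rw [← Nat.frequently_atTop_iff_infinite]
        apply ((hfreq1.and_eventually (eventually_ge_atTop (n + 1))).mono)
        rintro l ⟨h1, h2⟩
        exact ⟨h2, le_of_lt h1⟩
      have hfU : f ∈ limIdeal (fun j => I j (e n)) U := by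
        rw [mem_limIdeal_iff]
        apply Set.finite_empty.subset
        rintro j ⟨⟨l, ⟨-, hql⟩, rfl⟩, hnot⟩
        exact hnot (Or.inr hql)
      have hfS : f ∈ limIdeal (fun j => I j (e n)) (S (n + 1)).1 := by
        rw [← hSmax n U hUsub hUinf]; exact hfU
      -- but the exception set is infinite: contradiction
      have hinf : {j ∈ (S (n + 1)).1 | f ∉ I j (e n)}.Infinite := by
        apply Set.Infinite.mono
          (s := φ '' {l | n + 1 ≤ l ∧ a l < (e n : ℝ)})
        · rintro _ ⟨l, ⟨hl1, hl2⟩, rfl⟩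
          refine ⟨hφmem' hl1, ?_⟩
          rw [hI]
          rintro (h0 | hge)
          · exact hf h0
          · exact absurd hge (not_le.mpr hl2)
        · apply Set.Infinite.image (Set.injOn_of_injective hφmono.injective)
          rw [← Nat.frequently_atTop_iff_infinite]
          apply ((hfreq2.and_eventually (eventually_ge_atTop (n + 1))).mono)
          rintro l ⟨h1, h2⟩
          exact ⟨h2, h1⟩
      rw [mem_limIdeal_iff] at hfS
      exact hinf hfS
    have heq : limsup a atTop ≤ liminf a atTop := not_lt.mp hkey
    exact ⟨liminf a atTop,
      tendsto_of_liminf_eq_limsup rfl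
        (le_antisymm heq (liminf_le_limsup hbl hbg)) hbl hbg⟩
  -- the limit function
  refine ⟨φ, hφmono, fun f => atTop.liminf (fun l => ν (φ l) f), ?_, ?_, ?_, ?_, ?_⟩
  case _ =>
    intro f hf
    obtain ⟨L, hL⟩ := hconv f hf
    have h : atTop.liminf (fun l => ν (φ l) f) = L := hL.liminf_eq
    beta_reduce
    rw [h]
    exact hL
  all_goals {
    have hten : ∀ f : R, f ≠ 0 →
        Tendsto (fun l => ν (φ l) f) atTop (nhds (atTop.liminf (fun l => ν (φ l) f))) := by
      intro f hf
      obtain ⟨L, hL⟩ := hconv f hf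
      rwa [show atTop.liminf (fun l => ν (φ l) f) = L from hL.liminf_eq]
    first
    | -- nonnegativity
      exact fun f hf => ge_of_tendsto' (hten f hf) (fun l => hnonneg _ f hf)
    | -- multiplicativity
      { intro f g hf hg
        have h1 := hten (f * g) (mul_ne_zero hf hg)
        have h2 := ((hten f hf).add (hten g hg)).congr
          (fun l => (hmul (φ l) f g hf hg).symm)
        exact tendsto_nhds_unique h1 h2 }
    | -- ultrametric inequality
      { intro f g hf hg hfg
        exact le_of_tendsto_of_tendsto' ((hten f hf).min (hten g hg))
          (hten (f + g) hfg) (fun l => hadd (φ l) f g hf hg hfg) }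
    | -- units
      { intro u hu
        have hu0 : u ≠ 0 := hu.ne_zero
        have h2 : Tendsto (fun l => ν (φ l) u) atTop (nhds 0) := by
          simp only [hunit _ u hu]
          exact tendsto_const_nhds
        exact tendsto_nhds_unique (hten u hu0) h2 }
  }
end
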